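/- arXiv:2605.02725 — 2 statements merged into one kernel-verified Lean document; each statement's English description precedes it below -/
import Mathlib

section
/- Let L be a finitary first-order language with only finitely many function symbols and constant symbols, let φ be an L-sentence, and let n ≥ 1 be a natural number. Then there is an L-sentence expressing θ_{≤n}(φ), and there is an L-sentence expressing θ_n(φ). That is, there are L-sentences χ and χ' such that for every nonempty L-structure A: A ⊨ χ iff A has a substructure of cardinality ≤ n satisfying φ, and A ⊨ χ' iff A has a substructure of cardinality exactly n satisfying φ. -/
/- STATEMENT 6: For a finitary first-order language L with only finitely many function
symbols (including constant symbols) and n ≥ 1, both θ_{≤n}(φ) and θ_n(φ) are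
expressible by L-sentences. -/

open FirstOrder Language

universe u v

namespace ThetaAux

open FirstOrder Language

variable {L : FirstOrder.Language.{u, v}}

/-- Relativization of a bounded formula to `m` named elements: bound variables are
mapped to the named elements via `σ`, and quantifiers become finite conjunctions. -/
noncomputable def relativize {m : ℕ} :
    ∀ {k : ℕ}, L.BoundedFormula Empty k → (Fin k → Fin m) → L.Formula (Fin m)
  | _, BoundedFormula.falsum, _ => ⊥
  | _, BoundedFormula.equal t₁ t₂, σ =>
      Term.equal (t₁.relabel (Sum.elim Empty.elim σ)) (t₂.relabel (Sum.elim Empty.elim σ))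
  | _, BoundedFormula.rel R ts, σ =>
      R.formula (fun i => (ts i).relabel (Sum.elim Empty.elim σ))
  | _, BoundedFormula.imp f g, σ => (relativize f σ).imp (relativize g σ)
  | _, BoundedFormula.all f, σ =>
      BoundedFormula.iInf (fun j : Fin m => relativize f (Fin.snoc σ j))

theorem realize_relabel_term {M : Type*} [L.Structure M] {S : L.Substructure M} {m k : ℕ}
    (v : Fin m → S) (σ : Fin k → Fin m) (t : L.Term (Empty ⊕ Fin k)) :
    (t.relabel (Sum.elim Empty.elim σ)).realize (fun i => (v i : M))
      = ((t.realize (M := S) (Sum.elim Empty.elim (fun i => v (σ i)))) : M) := by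
  rw [Term.realize_relabel]
  have h := HomClass.realize_term (L := L) (S.subtype)
    (t := t) (v := Sum.elim Empty.elim (fun i => v (σ i)))
  rw [Substructure.coe_subtype] at h
  rw [← h]
  congr 1
  funext x
  cases x with
  | inl e => exact e.elim
  | inr i => rfl

theorem realize_relativize {M : Type*} [L.Structure M] {S : L.Substructure M}
    {m : ℕ} (v : Fin m → S) (hv : Function.Surjective v) :
    ∀ {k : ℕ} (φ : L.BoundedFormula Empty k) (σ : Fin k → Fin m),
      (relativize φ σ).Realize (fun i => (v i : M)) ↔
        φ.Realize (M := S) Empty.elim (fun i => v (σ i)) := by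
  intro k φ
  induction φ with
  | falsum =>
      intro σ
      simp [relativize, BoundedFormula.Realize]
  | equal t₁ t₂ =>
      intro σ
      simp only [relativize, Formula.realize_equal, realize_relabel_term,
        BoundedFormula.realize_bdEqual]
      exact ⟨fun h => Subtype.coe_injective h, fun h => congrArg _ h⟩
  | rel R ts =>
      intro σ
      simp only [relativize, Formula.realize_rel, realize_relabel_term,
        BoundedFormula.realize_rel]
      rfl
  | imp f g ihf ihg =>
      intro σ
      simp only [relativize, Formula.realize_imp, BoundedFormula.realize_imp, ihf, ihg]
  | all f ih =>
      intro σ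
      have key : ∀ j : Fin m, v ∘ Fin.snoc σ j = Fin.snoc (v ∘ σ) (v j) :=
        fun j => Fin.comp_snoc v σ j
      simp only [relativize, BoundedFormula.realize_all]
      rw [Formula.Realize, BoundedFormula.realize_iInf]
      constructor
      · intro h a
        obtain ⟨j, rfl⟩ := hv a
        have h2 : f.Realize (M := S) Empty.elim (v ∘ Fin.snoc σ j) :=
          (ih (Fin.snoc σ j)).1 (h j)
        rw [key j] at h2
        exact h2
      · intro h j
        refine (ih (Fin.snoc σ j)).2 ?_
        show f.Realize (M := S) Empty.elim (v ∘ Fin.snoc σ j)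
        rw [key j]
        exact h (v j)

/-- The formula asserting that the `m` named elements are closed under a given
function symbol applied to a given tuple of them. -/
noncomputable def closedFormula {m : ℕ}
    (q : Σ f : (Σ k : ℕ, L.Functions k), (Fin f.1 → Fin m)) : L.Formula (Fin m) :=
  BoundedFormula.iSup (fun j : Fin m =>
    Term.equal (Term.func q.1.2 (fun i => Term.var (q.2 i))) (Term.var j))

theorem realize_closedFormula {M : Type*} [L.Structure M] {m : ℕ} (v : Fin m → M)
    (q : Σ f : (Σ k : ℕ, L.Functions k), (Fin f.1 → Fin m)) :
    (closedFormula q).Realize v ↔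
      ∃ j : Fin m, Structure.funMap q.1.2 (fun i => v (q.2 i)) = v j := by
  rw [closedFormula, Formula.Realize, BoundedFormula.realize_iSup]
  simp [Term.equal, BoundedFormula.realize_bdEqual, Term.realize_relabel, Term.realize,
    Function.comp_def]

variable (L)

/-- The formula asserting that the `m` named elements are closed under all
function symbols. -/
noncomputable def closureFormula [Finite (Σ k : ℕ, L.Functions k)] (m : ℕ) :
    L.Formula (Fin m) :=
  haveI : Fintype (Σ f : (Σ k : ℕ, L.Functions k), (Fin f.1 → Fin m)) := Fintype.ofFinite _
  BoundedFormula.iInf closedFormula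

theorem realize_closureFormula [Finite (Σ k : ℕ, L.Functions k)] {M : Type*} [L.Structure M]
    {m : ℕ} (v : Fin m → M) :
    (closureFormula L m).Realize v ↔
      ∀ q : (Σ f : (Σ k : ℕ, L.Functions k), (Fin f.1 → Fin m)),
        ∃ j : Fin m, Structure.funMap q.1.2 (fun i => v (q.2 i)) = v j := by
  rw [closureFormula, Formula.Realize, BoundedFormula.realize_iInf]
  exact forall_congr' fun q => realize_closedFormula v q

/-- The formula asserting that the `m` named elements are pairwise distinct. -/
noncomputable def distinctFormula (m : ℕ) : L.Formula (Fin m) :=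
  BoundedFormula.iInf
    (fun p : (Finset.univ.offDiag : Finset (Fin m × Fin m)) =>
      (Term.equal (Term.var p.1.1) (Term.var p.1.2)).not)

theorem realize_distinctFormula {M : Type*} [L.Structure M] {m : ℕ} (v : Fin m → M) :
    (distinctFormula L m).Realize v ↔ Function.Injective v := by
  rw [distinctFormula, Formula.Realize, BoundedFormula.realize_iInf]
  constructor
  · intro h i j hij
    by_contra hne
    have hmem : (i, j) ∈ Finset.univ.offDiag := by
      simp [Finset.mem_offDiag, hne]
    have := h ⟨(i, j), hmem⟩
    simp [Term.equal, BoundedFormula.realize_not, BoundedFormula.realize_bdEqual,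
      Term.realize_relabel, Term.realize, Function.comp_def] at this
    exact this hij
  · intro h ⟨p, hp⟩
    rw [Finset.mem_offDiag] at hp
    simp only [Term.equal, BoundedFormula.realize_not, BoundedFormula.realize_bdEqual,
      Term.realize_relabel, Term.realize, Function.comp_def]
    intro heq
    exact hp.2.2 (h heq)

variable {L}

/-- From a tuple realizing the closure formula, the range is a substructure. -/
noncomputable def rangeSubstructure [Finite (Σ k : ℕ, L.Functions k)] {M : Type*}
    [L.Structure M] {m : ℕ} (v : Fin m → M)
    (hcl : (closureFormula L m).Realize v) : L.Substructure M where
  carrier := Set.range v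
  fun_mem := by
    intro k f x hx
    choose σ hσ using hx
    have hx' : x = fun i => v (σ i) := funext fun i => (hσ i).symm
    obtain ⟨j, hj⟩ := (realize_closureFormula L v).1 hcl ⟨⟨k, f⟩, σ⟩
    refine ⟨j, ?_⟩
    rw [hx']
    exact hj.symm

theorem sentence_realize_iff {M : Type*} [L.Structure M] {S : L.Substructure M}
    {m : ℕ} (w : Fin m → S) (hw : Function.Surjective w) (φ : L.Sentence) :
    (relativize φ Fin.elim0).Realize (fun i => ((w i : S) : M)) ↔ S ⊨ φ := by
  rw [realize_relativize w hw φ Fin.elim0]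
  have e1 : (Empty.elim : Empty → S) = default := funext fun x => x.elim
  have e2 : (fun i : Fin 0 => w (Fin.elim0 i)) = (default : Fin 0 → S) :=
    funext fun i => i.elim0
  rw [e1, e2]
  rfl

open scoped Classical in
theorem main_bridge [Finite (Σ k : ℕ, L.Functions k)] {M : Type*} [L.Structure M]
    (φ : L.Sentence) {m : ℕ} (hm : 1 ≤ m) :
    (∃ v : Fin m → M, (closureFormula L m).Realize v ∧ (relativize φ Fin.elim0).Realize v) ↔
      ∃ S : L.Substructure M, Nonempty S ∧ Finite S ∧ Nat.card S ≤ m ∧ S ⊨ φ := by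
  constructor
  · rintro ⟨v, hcl, hrel⟩
    refine ⟨rangeSubstructure v hcl, ?_, ?_, ?_, ?_⟩
    · exact ⟨⟨v ⟨0, hm⟩, Set.mem_range_self _⟩⟩
    · exact Set.Finite.to_subtype (Set.finite_range v)
    · haveI : Finite (rangeSubstructure v hcl) := Set.Finite.to_subtype (Set.finite_range v)
      have hsurj : Function.Surjective
          (fun i : Fin m => (⟨v i, Set.mem_range_self i⟩ : rangeSubstructure v hcl)) := by
        rintro ⟨x, i, rfl⟩
        exact ⟨i, rfl⟩
      calc Nat.card (rangeSubstructure v hcl) ≤ Nat.card (Fin m) :=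
            Nat.card_le_card_of_surjective _ hsurj
        _ = m := by simp
    · have hsurj : Function.Surjective
          (fun i : Fin m => (⟨v i, Set.mem_range_self i⟩ : rangeSubstructure v hcl)) := by
        rintro ⟨x, i, rfl⟩
        exact ⟨i, rfl⟩
      exact (sentence_realize_iff _ hsurj φ).1 hrel
  · rintro ⟨S, hne, hfin, hcard, hφ⟩
    have hpos : 0 < Nat.card S := Nat.card_pos
    set c := Nat.card S with hc
    let e : S ≃ Fin c := Finite.equivFin S
    let w : Fin m → S := fun i =>
      e.symm ⟨if h : (i : ℕ) < c then (i : ℕ) else 0, by split <;> omega⟩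
    have hw : Function.Surjective w := by
      intro s
      refine ⟨⟨(e s : ℕ), lt_of_lt_of_le (e s).2 hcard⟩, ?_⟩
      have hlt : ((e s : ℕ) : ℕ) < c := (e s).2
      simp only [w, hlt, dif_pos]
      rw [show (⟨(e s : ℕ), hlt⟩ : Fin c) = e s from Fin.ext rfl]
      exact e.symm_apply_apply s
    refine ⟨fun i => ((w i : S) : M), ?_, ?_⟩
    · rw [realize_closureFormula]
      rintro ⟨⟨k, f⟩, σ⟩
      obtain ⟨j, hj⟩ := hw (Structure.funMap f (fun i => w (σ i)))
      exact ⟨j, congrArg (Subtype.val) hj |>.symm ▸ rfl⟩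
    · exact (sentence_realize_iff w hw φ).2 hφ

theorem main_bridge_exact [Finite (Σ k : ℕ, L.Functions k)] {M : Type*} [L.Structure M]
    (φ : L.Sentence) {m : ℕ} (hm : 1 ≤ m) :
    (∃ v : Fin m → M, (distinctFormula L m).Realize v ∧
        (closureFormula L m).Realize v ∧ (relativize φ Fin.elim0).Realize v) ↔
      ∃ S : L.Substructure M, Nonempty S ∧ Finite S ∧ Nat.card S = m ∧ S ⊨ φ := by
  constructor
  · rintro ⟨v, hdis, hcl, hrel⟩
    have hinj : Function.Injective v := (realize_distinctFormula L v).1 hdis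
    refine ⟨rangeSubstructure v hcl, ?_, ?_, ?_, ?_⟩
    · exact ⟨⟨v ⟨0, hm⟩, Set.mem_range_self _⟩⟩
    · exact Set.Finite.to_subtype (Set.finite_range v)
    · have h1 : Nat.card (Set.range v) = Nat.card (Fin m) :=
        Nat.card_congr (Equiv.ofInjective v hinj).symm
      have h2 : Nat.card (rangeSubstructure v hcl) = Nat.card (Set.range v) := rfl
      rw [h2, h1]
      simp
    · have hsurj : Function.Surjective
          (fun i : Fin m => (⟨v i, Set.mem_range_self i⟩ : rangeSubstructure v hcl)) := by
        rintro ⟨x, i, rfl⟩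
        exact ⟨i, rfl⟩
      exact (sentence_realize_iff _ hsurj φ).1 hrel
  · rintro ⟨S, hne, hfin, hcard, hφ⟩
    let e : S ≃ Fin m := (Finite.equivFin S).trans (finCongr hcard)
    let w : Fin m → S := e.symm
    have hw : Function.Surjective w := e.symm.surjective
    refine ⟨fun i => ((w i : S) : M), ?_, ?_, ?_⟩
    · rw [realize_distinctFormula]
      exact Subtype.coe_injective.comp e.symm.injective
    · rw [realize_closureFormula]
      rintro ⟨⟨k, f⟩, σ⟩
      obtain ⟨j, hj⟩ := hw (Structure.funMap f (fun i => w (σ i)))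
      exact ⟨j, congrArg (Subtype.val) hj |>.symm ▸ rfl⟩
    · exact (sentence_realize_iff w hw φ).2 hφ

end ThetaAux

open ThetaAux in
theorem theta_le_n_and_theta_n_expressible
    {L : FirstOrder.Language.{u, v}} [Finite (Σ n : ℕ, L.Functions n)]
    (φ : L.Sentence) (n : ℕ) (hn : 1 ≤ n) :
    (∃ χ : L.Sentence,
        ∀ (M : Type (max u v)) [L.Structure M] [Nonempty M],
          M ⊨ χ ↔ ∃ S : L.Substructure M,
            Nonempty S ∧ Finite S ∧ Nat.card S ≤ n ∧ S ⊨ φ) ∧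
      (∃ χ' : L.Sentence,
        ∀ (M : Type (max u v)) [L.Structure M] [Nonempty M],
          M ⊨ χ' ↔ ∃ S : L.Substructure M,
            Nonempty S ∧ Finite S ∧ Nat.card S = n ∧ S ⊨ φ) := by
  constructor
  · refine ⟨Formula.iExs (Fin n) (Formula.relabel (Sum.inr : Fin n → Empty ⊕ Fin n)
      ((closureFormula L n) ⊓ relativize φ Fin.elim0)), ?_⟩
    intro M _ _
    rw [show (M ⊨ Formula.iExs (Fin n) (Formula.relabel (Sum.inr : Fin n → Empty ⊕ Fin n)
        ((closureFormula L n) ⊓ relativize φ Fin.elim0))) =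
      (Formula.iExs (Fin n) (Formula.relabel (Sum.inr : Fin n → Empty ⊕ Fin n)
        ((closureFormula L n) ⊓ relativize φ Fin.elim0))).Realize (default : Empty → M) from rfl,
      Formula.realize_iExs]
    simp only [Formula.realize_relabel, Sum.elim_comp_inr, Sum.elim_inr, Formula.realize_inf]
    exact main_bridge φ hn
  · refine ⟨Formula.iExs (Fin n) (Formula.relabel (Sum.inr : Fin n → Empty ⊕ Fin n)
      ((distinctFormula L n) ⊓ ((closureFormula L n) ⊓ relativize φ Fin.elim0))), ?_⟩
    intro M _ _
    rw [show (M ⊨ Formula.iExs (Fin n) (Formula.relabel (Sum.inr : Fin n → Empty ⊕ Fin n)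
        ((distinctFormula L n) ⊓ ((closureFormula L n) ⊓ relativize φ Fin.elim0)))) =
      (Formula.iExs (Fin n) (Formula.relabel (Sum.inr : Fin n → Empty ⊕ Fin n)
        ((distinctFormula L n) ⊓ ((closureFormula L n) ⊓ relativize φ Fin.elim0)))).Realize
        (default : Empty → M) from rfl,
      Formula.realize_iExs]
    simp only [Formula.realize_relabel, Sum.elim_comp_inr, Sum.elim_inr, Formula.realize_inf]
    rw [← main_bridge_exact φ hn]
end

section
/- Let L be any finitary first-order language, T an L-theory, and φ an L-sentence. Let Θ be the set of all universal (Π⁰₁) L-sentences ψ such that T ∪ {φ} ⊨ ψ. Then the following are equivalent: (i) there is a single L-sentence χ such that for every nonempty L-structure A with A ⊨ T, A ⊨ χ iff there exist B ⊨ T ∪ {φ} and an L-embedding of A into B; (ii) Θ has a strongest member, i.e., there is ψ₀ ∈ Θ such that T ∪ {ψ₀} ⊨ ψ for every ψ ∈ Θ. -/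
/- STATEMENT 15: For any finitary first-order language L, L-theory T and L-sentence φ,
with Θ the set of universal consequences of T ∪ {φ}: θ*(φ) is expressible over models
of T by a single L-sentence iff Θ has a strongest member modulo T. -/

open FirstOrder Language

universe u v

namespace SatSub

/-- A universal (Π⁰₁) sentence: `∀ x₁ … x_k, ψ` with `ψ` quantifier-free. -/
def IsUniversalSentence {L : FirstOrder.Language.{u, v}} (χ : L.Sentence) : Prop :=
  ∃ (k : ℕ) (ψ : L.BoundedFormula Empty k), ψ.IsQF ∧ χ = ψ.alls

/-- The set Θ of universal sentences that are consequences of T ∪ {φ}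
(over nonempty structures). -/
def univConsequences {L : FirstOrder.Language.{u, v}} (T : L.Theory) (φ : L.Sentence) :
    Set L.Sentence :=
  {ψ | IsUniversalSentence ψ ∧
    ∀ (N : Type (max u v)) [L.Structure N] [Nonempty N], N ⊨ T → N ⊨ φ → N ⊨ ψ}

universe w

variable {L : FirstOrder.Language.{u, v}}

section helpers

variable {α : Type*} {n : ℕ}

lemma isQF_toFormula {φ : L.BoundedFormula α n} (h : φ.IsQF) : φ.toFormula.IsQF := by
  induction h with
  | falsum => exact BoundedFormula.isQF_bot
  | of_isAtomic h =>
    cases h with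
    | equal t₁ t₂ => exact (BoundedFormula.IsAtomic.equal _ _).isQF
    | rel R ts => exact (BoundedFormula.IsAtomic.rel _ _).isQF
  | imp _ _ ih1 ih2 => exact ih1.imp ih2

lemma isQF_restrictFreeVar [DecidableEq α] {β : Type*} :
    ∀ {n : ℕ} {φ : L.BoundedFormula α n}, φ.IsQF → ∀ (f : φ.freeVarFinset → β),
      (φ.restrictFreeVar f).IsQF := by
  intro n φ h
  induction h with
  | falsum => exact fun _ => BoundedFormula.isQF_bot
  | of_isAtomic h =>
    cases h with
    | equal t₁ t₂ => exact fun f => (BoundedFormula.IsAtomic.equal _ _).isQF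
    | rel R ts => exact fun f => (BoundedFormula.IsAtomic.rel _ _).isQF
  | imp _ _ ih1 ih2 => exact fun f => (ih1 _).imp (ih2 _)

/-- Conjunction of a list of formulas. -/
def conjList (l : List (L.Formula α)) : L.Formula α := l.foldr (· ⊓ ·) ⊤

lemma conjList_isQF {l : List (L.Formula α)} (h : ∀ ψ ∈ l, ψ.IsQF) :
    (conjList l).IsQF := by
  induction l with
  | nil => exact BoundedFormula.IsQF.top
  | cons a l ih =>
      exact (h a (List.mem_cons_self)).inf (ih fun ψ hψ => h ψ (List.mem_cons_of_mem _ hψ))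

lemma realize_conjList {M : Type*} [L.Structure M] {l : List (L.Formula α)} {v : α → M} :
    (conjList l).Realize v ↔ ∀ ψ ∈ l, ψ.Realize v := by
  induction l with
  | nil => simp [conjList]
  | cons a l ih =>
      simp only [conjList, List.foldr_cons, Formula.realize_inf, List.mem_cons]
      rw [show (List.foldr (fun x1 x2 => x1 ⊓ x2) ⊤ l) = conjList l from rfl, ih]
      constructor
      · rintro ⟨h1, h2⟩ ψ (rfl | hψ)
        · exact h1
        · exact h2 ψ hψ
      · exact fun h => ⟨h a (Or.inl rfl), fun ψ hψ => h ψ (Or.inr hψ)⟩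

lemma isUniversalSentence_iAlls {γ : Type w} [Finite γ] {φ : L.Formula γ}
    (h : φ.IsQF) (f : γ → Empty ⊕ γ) : IsUniversalSentence ((φ.relabel f).iAlls γ) := by
  unfold Formula.iAlls
  exact ⟨_, _, (h.relabel _).relabel _, rfl⟩

lemma realize_iAlls_inr {γ : Type*} [Finite γ] {φ : L.Formula γ}
    {M : Type*} [L.Structure M] :
    M ⊨ ((φ.relabel (Sum.inr : γ → Empty ⊕ γ)).iAlls γ) ↔ ∀ i : γ → M, φ.Realize i := by
  rw [Sentence.Realize, Formula.realize_iAlls]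
  simp only [Formula.realize_relabel]
  exact Iff.rfl

lemma realize_of_embedding_of_isUniversal {χ : L.Sentence} (h : IsUniversalSentence χ)
    {A : Type*} {B : Type*} [L.Structure A] [L.Structure B] (f : A ↪[L] B)
    (hB : B ⊨ χ) : A ⊨ χ := by
  obtain ⟨k, ψ, hqf, rfl⟩ := h
  rw [Sentence.Realize, BoundedFormula.realize_alls] at hB ⊢
  intro xs
  have h2 := hqf.realize_embedding f (v := (default : Empty → A)) (xs := xs)
  rw [Subsingleton.elim (⇑f ∘ (default : Empty → A)) (default : Empty → B)] at h2
  exact h2.1 (hB _)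


end helpers

lemma combine_universal {χ₁ χ₂ : L.Sentence} (h₁ : IsUniversalSentence χ₁)
    (h₂ : IsUniversalSentence χ₂) :
    ∃ χ : L.Sentence, IsUniversalSentence χ ∧
      ∀ (M : Type w) [L.Structure M] [Nonempty M], (M ⊨ χ ↔ M ⊨ χ₁ ∧ M ⊨ χ₂) := by
  obtain ⟨k₁, ψ₁, hq₁, rfl⟩ := h₁
  obtain ⟨k₂, ψ₂, hq₂, rfl⟩ := h₂
  classical
  let Φ : L.Formula (Fin k₁ ⊕ Fin k₂) :=
    (ψ₁.toFormula.relabel (Sum.elim Empty.elim Sum.inl)) ⊓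
      (ψ₂.toFormula.relabel (Sum.elim Empty.elim Sum.inr))
  have hΦ : Φ.IsQF :=
    ((isQF_toFormula hq₁).relabel _).inf ((isQF_toFormula hq₂).relabel _)
  refine ⟨(Φ.relabel (Sum.inr : _ → Empty ⊕ _)).iAlls (Fin k₁ ⊕ Fin k₂), isUniversalSentence_iAlls hΦ _, ?_⟩
  intro M _ _
  rw [realize_iAlls_inr]
  have hemp : ∀ {k : ℕ} (ψ : L.BoundedFormula Empty k) (w : Empty → M) (xs : Fin k → M),
      ψ.Realize w xs ↔ ψ.Realize default xs := by
    intro k ψ w xs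
    rw [Subsingleton.elim w default]
  have hrel : ∀ i : Fin k₁ ⊕ Fin k₂ → M, Φ.Realize i ↔
      (ψ₁.Realize (default : Empty → M) (i ∘ Sum.inl) ∧
        ψ₂.Realize (default : Empty → M) (i ∘ Sum.inr)) := by
    intro i
    rw [show Φ.Realize i ↔ _ ∧ _ from Formula.realize_inf, Formula.realize_relabel,
      Formula.realize_relabel, BoundedFormula.realize_toFormula,
      BoundedFormula.realize_toFormula, hemp ψ₁, hemp ψ₂]
    exact Iff.rfl
  constructor
  · intro h
    constructor
    · rw [Sentence.Realize, BoundedFormula.realize_alls]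
      intro xs
      exact ((hrel (Sum.elim xs fun _ => Classical.arbitrary M)).1
        (h _)).1
    · rw [Sentence.Realize, BoundedFormula.realize_alls]
      intro xs
      exact ((hrel (Sum.elim (fun _ => Classical.arbitrary M) xs)).1
        (h _)).2
  · rintro ⟨ha, hb⟩ i
    rw [Sentence.Realize, BoundedFormula.realize_alls] at ha hb
    exact (hrel i).2 ⟨ha _, hb _⟩

/-- a trivially true universal sentence -/
lemma exists_true_universal :
    ∃ χ : L.Sentence, IsUniversalSentence χ ∧
      ∀ (M : Type w) [L.Structure M] [Nonempty M], M ⊨ χ := by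
  refine ⟨(⊥ : L.BoundedFormula Empty 0).not.alls, ⟨0, _, BoundedFormula.isQF_bot.not, rfl⟩, ?_⟩
  intro M _ _
  rw [Sentence.Realize, BoundedFormula.realize_alls]
  intro xs
  rw [BoundedFormula.realize_not]
  exact fun h => h

lemma conj_universal_list (l : List L.Sentence) (h : ∀ χ ∈ l, IsUniversalSentence χ) :
    ∃ χ : L.Sentence, IsUniversalSentence χ ∧
      ∀ (M : Type w) [L.Structure M] [Nonempty M], (M ⊨ χ ↔ ∀ χ' ∈ l, M ⊨ χ') := by
  induction l with
  | nil =>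
    obtain ⟨χ, hχ, hall⟩ := exists_true_universal (L := L)
    exact ⟨χ, hχ, fun M _ _ => by simpa using hall M⟩
  | cons a l ih =>
    obtain ⟨χ, hχ, hiff⟩ := ih fun χ hχ => h χ (List.mem_cons_of_mem _ hχ)
    obtain ⟨χ', hχ', hiff'⟩ := combine_universal (h a (List.mem_cons_self)) hχ
    refine ⟨χ', hχ', fun M _ _ => ?_⟩
    rw [hiff' M, hiff M]
    simp

lemma embeds_of_universal_consequences (T : L.Theory) (φ : L.Sentence)
    (M : Type (max u v)) [L.Structure M] [Nonempty M]
    (hM : ∀ ψ ∈ univConsequences T φ, M ⊨ ψ) :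
    ∃ (B : Type (max u v)) (_ : L.Structure B), B ⊨ T ∧ B ⊨ φ ∧ Nonempty (M ↪[L] B) := by
  classical
  let D : L[[M]].Theory :=
    {χ | ∃ ψ : L.Formula M, ψ.IsQF ∧ ψ.Realize (fun a : M => a) ∧ χ = Formula.equivSentence ψ}
  let S : L[[M]].Theory := (L.lhomWithConstants M).onTheory (T ∪ {φ}) ∪ D
  have hSat : S.IsSatisfiable := by
    rw [Theory.isSatisfiable_iff_isFinitelySatisfiable]
    intro T0 hT0
    by_contra hns
    set F : Set (L.Formula M) :=
      {ψ | ψ.IsQF ∧ ψ.Realize (fun a : M => a) ∧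
        Formula.equivSentence ψ ∈ (T0 : L[[M]].Theory)} with hF
    have hFfin : F.Finite := by
      have himg : Formula.equivSentence '' F ⊆ (T0 : L[[M]].Theory) := by
        rintro χ ⟨ψ, hψ, rfl⟩; exact hψ.2.2
      exact Set.Finite.of_finite_image (T0.finite_toSet.subset himg)
        (Function.Injective.injOn (Equiv.injective _))
    let l := hFfin.toFinset.toList
    have hl : ∀ ψ ∈ l, ψ ∈ F := fun ψ h => hFfin.mem_toFinset.1 (Finset.mem_toList.1 h)
    have hl' : ∀ ψ ∈ F, ψ ∈ l := fun ψ h => Finset.mem_toList.2 (hFfin.mem_toFinset.2 h)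
    let Ψ := conjList l
    have hΨqf : Ψ.IsQF := conjList_isQF fun ψ h => (hl ψ h).1
    have hΨid : Ψ.Realize (fun a : M => a) := realize_conjList.2 fun ψ h => (hl ψ h).2.1
    let s : Set M := ↑Ψ.freeVarFinset
    haveI : Finite ↥s := Ψ.freeVarFinset.finite_toSet.to_subtype
    have hsub : ↑Ψ.freeVarFinset ⊆ s := subset_rfl
    let Ψ' : L.Formula ↥s := Ψ.restrictFreeVar (Set.inclusion hsub)
    have hΨ'qf : Ψ'.IsQF := isQF_restrictFreeVar hΨqf _
    let θ : L.Sentence := (Ψ'.not.relabel (Sum.inr : ↥s → Empty ⊕ ↥s)).iAlls ↥s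
    have hθmem : θ ∈ univConsequences T φ := by
      refine ⟨isUniversalSentence_iAlls hΨ'qf.not _, ?_⟩
      intro N _ _ hT hφ
      show N ⊨ (Ψ'.not.relabel (Sum.inr : ↥s → Empty ⊕ ↥s)).iAlls ↥s
      rw [realize_iAlls_inr]
      intro i
      rw [Formula.realize_not]
      intro hΨ'
      let c : M → N := fun a => if h : a ∈ s then i ⟨a, h⟩ else Classical.arbitrary N
      have hci : (c ∘ (Subtype.val : ↥s → M)) = i := by
        funext a
        simp only [Function.comp_apply, c]
        rw [dif_pos a.2]
      have hc : Ψ.Realize c := by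
        have h2 := BoundedFormula.realize_restrictFreeVar' (φ := Ψ) hsub (v := c)
          (xs := default) (M := N)
        rw [hci] at h2
        exact h2.1 hΨ'
      letI : (constantsOn M).Structure N := constantsOn.structure c
      haveI hNT : N ⊨ T ∪ {φ} :=
        Theory.model_union_iff.2 ⟨hT, Theory.model_singleton_iff.2 hφ⟩
      haveI hmodel : N ⊨ (T0 : L[[M]].Theory) := by
        refine ⟨fun χ hχ => ?_⟩
        rcases hT0 hχ with h1 | h2
        · have hmod : N ⊨ (L.lhomWithConstants M).onTheory (T ∪ {φ}) :=
            (LHom.onTheory_model _ _).2 hNT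
          exact hmod.realize_of_mem χ h1
        · obtain ⟨ψ, hqf, hid, rfl⟩ := h2
          rw [Formula.realize_equivSentence]
          exact realize_conjList.1 hc ψ (hl' ψ ⟨hqf, hid, hχ⟩)
      exact hns (Theory.Model.isSatisfiable N)
    have hMθ := hM θ hθmem
    rw [show (M ⊨ θ) = (M ⊨ (Ψ'.not.relabel (Sum.inr : ↥s → Empty ⊕ ↥s)).iAlls ↥s) from rfl,
      realize_iAlls_inr] at hMθ
    have hno := hMθ (fun a => (a : M))
    rw [Formula.realize_not] at hno
    apply hno
    have h2 := BoundedFormula.realize_restrictFreeVar' (φ := Ψ) hsub (v := fun a : M => a)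
      (xs := default) (M := M)
    exact h2.2 hΨid
  let N := hSat.some
  letI : L.Structure N := (L.lhomWithConstants M).reduct N
  haveI : (L.lhomWithConstants M).IsExpansionOn (N : Type (max u v)) :=
    LHom.isExpansionOn_reduct _ _
  have hS : (N : Type (max u v)) ⊨ S := N.is_model
  have hNT : (N : Type (max u v)) ⊨ T ∪ {φ} :=
    (LHom.onTheory_model _ _).1 (hS.mono Set.subset_union_left)
  have htr : ∀ (ψ : L.Formula M), ψ.IsQF → ψ.Realize (fun a : M => a) →
      ψ.Realize (fun a : M => ((L.con a : L[[M]].Constants) : N)) := by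
    intro ψ h1 h2
    have hmem : Formula.equivSentence ψ ∈ S := Or.inr ⟨ψ, h1, h2, rfl⟩
    have h3 := hS.realize_of_mem _ hmem
    rwa [Formula.realize_equivSentence] at h3
  refine ⟨N, inferInstance, (Theory.model_union_iff.1 hNT).1,
    Theory.model_singleton_iff.1 (Theory.model_union_iff.1 hNT).2, ⟨?_⟩⟩
  refine ⟨⟨fun a => ((L.con a : L[[M]].Constants) : N), ?_⟩, ?_, ?_⟩
  · -- injective
    intro a b hab
    by_contra hne
    have h2 := htr (Term.equal (Term.var a) (Term.var b)).not
      ((BoundedFormula.IsAtomic.equal _ _).isQF.not)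
      (by rw [Formula.realize_not, Formula.realize_equal]; simpa using hne)
    rw [Formula.realize_not, Formula.realize_equal] at h2
    exact h2 (by simpa using hab)
  · -- map_fun
    intro n F x
    have h2 := htr (Term.equal (Term.func F (fun i => Term.var (x i))) (Term.var (Structure.funMap F x)))
      ((BoundedFormula.IsAtomic.equal _ _).isQF)
      (by rw [Formula.realize_equal]; simp [Term.realize])
    rw [Formula.realize_equal] at h2
    simpa [Term.realize, Function.comp_def] using h2.symm
  · -- map_rel
    intro n r x
    constructor
    · intro h
      by_contra hnr
      have h2 := htr (Relations.formula r (fun i => Term.var (x i))).not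
        ((BoundedFormula.IsAtomic.rel _ _).isQF.not)
        (by rw [Formula.realize_not, Formula.realize_rel]; simpa [Term.realize] using hnr)
      rw [Formula.realize_not, Formula.realize_rel] at h2
      exact h2 (by simpa [Term.realize, Function.comp_def] using h)
    · intro h
      have h2 := htr (Relations.formula r (fun i => Term.var (x i)))
        ((BoundedFormula.IsAtomic.rel _ _).isQF)
        (by rw [Formula.realize_rel]; simpa [Term.realize] using h)
      rw [Formula.realize_rel] at h2
      simpa [Term.realize, Function.comp_def] using h2


theorem thetaStar_sentence_iff_strongest_universal_consequence
    {L : FirstOrder.Language.{u, v}} (T : L.Theory) (φ : L.Sentence) :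
    (∃ χ : L.Sentence,
        ∀ (M : Type (max u v)) [L.Structure M] [Nonempty M], M ⊨ T →
          (M ⊨ χ ↔ ∃ (B : Type (max u v)) (_ : L.Structure B),
            B ⊨ T ∧ B ⊨ φ ∧ Nonempty (M ↪[L] B))) ↔
      (∃ ψ₀ ∈ univConsequences T φ, ∀ ψ ∈ univConsequences T φ,
        ∀ (M : Type (max u v)) [L.Structure M] [Nonempty M],
          M ⊨ T → M ⊨ ψ₀ → M ⊨ ψ) := by
  constructor
  · rintro ⟨χ, hχ⟩
    have hmod : (T ∪ univConsequences T φ) ⊨ᵇ χ := by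
      rw [Theory.models_sentence_iff]
      intro N
      have hNT : (N : Type (max u v)) ⊨ T := N.is_model.mono Set.subset_union_left
      have hNΘ : ∀ ψ ∈ univConsequences T φ, (N : Type (max u v)) ⊨ ψ := fun ψ hψ =>
        N.is_model.realize_of_mem ψ (Or.inr hψ)
      obtain ⟨B, SB, hBT, hBφ, ⟨f⟩⟩ := embeds_of_universal_consequences T φ N hNΘ
      exact (hχ N hNT).2 ⟨B, SB, hBT, hBφ, ⟨f⟩⟩
    rw [Theory.models_iff_finset_models] at hmod
    obtain ⟨T0, hT0sub, hT0mod⟩ := hmod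
    classical
    let lΘ : List L.Sentence :=
      T0.toList.filter (fun χ' => decide (χ' ∈ univConsequences T φ))
    have hlΘ : ∀ χ' ∈ lΘ, χ' ∈ univConsequences T φ := fun χ' h => by
      have := List.of_mem_filter h
      simpa using this
    obtain ⟨ψ₀, hψ₀U, hψ₀iff⟩ := conj_universal_list lΘ (fun χ' h => (hlΘ χ' h).1)
    refine ⟨ψ₀, ⟨hψ₀U, ?_⟩, ?_⟩
    · intro N _ _ hT hφ2
      exact (hψ₀iff N).2 (fun χ' hχ' => (hlΘ χ' hχ').2 N hT hφ2)
    · intro ψ hψ M _ _ hMT hMψ₀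
      haveI : M ⊨ (T0 : L.Theory) := by
        refine ⟨fun χ' hχ' => ?_⟩
        rcases hT0sub hχ' with h1 | h2
        · exact hMT.realize_of_mem _ h1
        · exact (hψ₀iff M).1 hMψ₀ χ'
            (List.mem_filter.2 ⟨Finset.mem_toList.2 hχ', by simpa using h2⟩)
      have hMχ : M ⊨ χ := hT0mod.realize_sentence M
      obtain ⟨B, SB, hBT, hBφ, ⟨f⟩⟩ := (hχ M hMT).1 hMχ
      haveI : Nonempty B := ⟨f (Classical.arbitrary M)⟩
      exact realize_of_embedding_of_isUniversal hψ.1 f (hψ.2 B hBT hBφ)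
  · rintro ⟨ψ₀, hψ₀Θ, hstr⟩
    refine ⟨ψ₀, ?_⟩
    intro M _ _ hMT
    constructor
    · intro hMψ₀
      exact embeds_of_universal_consequences T φ M (fun ψ hψ => hstr ψ hψ M hMT hMψ₀)
    · rintro ⟨B, SB, hBT, hBφ, ⟨f⟩⟩
      haveI : Nonempty B := ⟨f (Classical.arbitrary M)⟩
      exact realize_of_embedding_of_isUniversal hψ₀Θ.1 f (hψ₀Θ.2 B hBT hBφ)

end SatSub
end
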